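/- Suppose x* is a lexicographic maximum of X ⊆ ℝ^n. If Algorithm A (the progressive filling algorithm) is run with tolerance ε = 0, then every possible output x̂ of A satisfies σ_i(x̂) = σ_i(x*) for all i ∈ [n]; in particular x̂ is itself a lexicographic maximum. Conversely, every lexicographic maximum of X is a possible output of A with ε = 0. -/

import Mathlib

noncomputable def sortedComp {n : ℕ} (x : Fin n → ℝ) (k : Fin n) : ℝ :=
  x (Tuple.sort x k)

def IsLexMax {n : ℕ} (X : Set (Fin n → ℝ)) (y : Fin n → ℝ) : Prop :=
  y ∈ X ∧ ∀ x ∈ X, x = y ∨ ∃ i : Fin n,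
    (∀ j : Fin n, j < i → sortedComp y j = sortedComp x j) ∧
    sortedComp x i < sortedComp y i

/-- The value of the optimization problem at iteration `k` of the progressive
filling algorithm, given previous iterate `y`. -/
noncomputable def Hfun {n : ℕ} (X : Set (Fin n → ℝ)) (k : Fin n) (y : Fin n → ℝ) : ℝ :=
  sSup {v : ℝ | ∃ z ∈ X,
    (∀ i : Fin n, i < k → sortedComp y i ≤ sortedComp z i) ∧ v = sortedComp z k}

/-- `out` is a possible output of the progressive filling algorithm on `(X, ε)`. -/
def PossibleOutput {n : ℕ} (X : Set (Fin n → ℝ)) (ε : ℝ) (out : Fin n → ℝ) : Prop :=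
  ∃ seq : Fin (n + 1) → (Fin n → ℝ),
    seq (Fin.last n) = out ∧
    ∀ k : Fin n,
      seq k.succ ∈ X ∧
      (∀ i : Fin n, i < k → sortedComp (seq k.castSucc) i ≤ sortedComp (seq k.succ) i) ∧
      Hfun X k (seq k.castSucc) - ε ≤ sortedComp (seq k.succ) k

lemma lexmax_le {n : ℕ} {X : Set (Fin n → ℝ)} {y : Fin n → ℝ} (hy : IsLexMax X y)
    {z : Fin n → ℝ} (hz : z ∈ X) (k : Fin n)
    (h : ∀ i : Fin n, i < k → sortedComp y i ≤ sortedComp z i) :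
    (∀ i : Fin n, i < k → sortedComp z i ≤ sortedComp y i) ∧
      sortedComp z k ≤ sortedComp y k := by
  rcases hy.2 z hz with rfl | ⟨i0, heq, hlt⟩
  · exact ⟨fun i _ => le_rfl, le_rfl⟩
  · have hk : k ≤ i0 := by
      by_contra hc
      push_neg at hc
      exact absurd (h i0 hc) (not_le.mpr hlt)
    refine ⟨fun i hi => (heq i (lt_of_lt_of_le hi hk)).ge, ?_⟩
    rcases lt_or_eq_of_le hk with h1 | h1
    · exact (heq k h1).ge
    · subst h1; exact hlt.le

lemma lexmax_eq {n : ℕ} {X : Set (Fin n → ℝ)} {y : Fin n → ℝ} (hy : IsLexMax X y)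
    {z : Fin n → ℝ} (hz : z ∈ X)
    (h : ∀ i : Fin n, sortedComp y i ≤ sortedComp z i) : z = y := by
  rcases hy.2 z hz with rfl | ⟨i0, _, hlt⟩
  · rfl
  · exact absurd (h i0) (not_le.mpr hlt)

lemma hfun_bdd {n : ℕ} {X : Set (Fin n → ℝ)} (hX : IsCompact X) (k : Fin n)
    (y : Fin n → ℝ) :
    BddAbove {v : ℝ | ∃ z ∈ X,
      (∀ i : Fin n, i < k → sortedComp y i ≤ sortedComp z i) ∧ v = sortedComp z k} := by
  have hM : ∀ i : Fin n, ∃ M, ∀ x ∈ X, x i ≤ M := by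
    intro i
    have hc : IsCompact ((fun x : Fin n → ℝ => x i) '' X) := hX.image (continuous_apply i)
    rcases hc.bddAbove with ⟨M, hMb⟩
    exact ⟨M, fun x hx => hMb ⟨x, hx, rfl⟩⟩
  choose M hMle using hM
  refine ⟨Finset.univ.sup' ⟨k, Finset.mem_univ k⟩ M, ?_⟩
  rintro v ⟨z, hz, -, rfl⟩
  calc sortedComp z k = z (Tuple.sort z k) := rfl
    _ ≤ M (Tuple.sort z k) := hMle _ z hz
    _ ≤ _ := Finset.le_sup' M (Finset.mem_univ _)

theorem algorithm_zero_tolerance_iff_lexmax {n : ℕ} (X : Set (Fin n → ℝ))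
    (hX : IsCompact X) (xstar : Fin n → ℝ) (hstar : IsLexMax X xstar) :
    (∀ xhat, PossibleOutput X 0 xhat →
      (∀ i : Fin n, sortedComp xhat i = sortedComp xstar i) ∧ IsLexMax X xhat) ∧
    (∀ y, IsLexMax X y → PossibleOutput X 0 y) := by
  constructor
  · intro xhat hout
    obtain ⟨seq, hlast, hstep⟩ := hout
    have key : xhat = xstar := by
      rcases Nat.eq_zero_or_pos n with hn | hn
      · subst hn; funext i; exact i.elim0
      · have Q : ∀ m : ℕ, (hm : m ≤ n) → ∀ i : Fin n, i.val < m →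
            sortedComp xstar i ≤ sortedComp (seq ⟨m, Nat.lt_succ_of_le hm⟩) i := by
          intro m
          induction m with
          | zero => intro _ i hi; omega
          | succ m ih =>
            intro hm i hi
            have hmn : m < n := hm
            set k : Fin n := ⟨m, hmn⟩ with hk
            obtain ⟨hmem, hcons, hH⟩ := hstep k
            have ihm := ih (le_of_lt hmn)
            have feas : ∀ j : Fin n, j < k →
                sortedComp (seq k.castSucc) j ≤ sortedComp xstar j := by
              rcases Nat.eq_zero_or_pos m with h0 | h0
              · intro j hj
                exfalso
                have : j.val < m := hj
                omega
              · have hmem' : seq k.castSucc ∈ X := by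
                  have h1 := (hstep ⟨m - 1, by omega⟩).1
                  have : (⟨m - 1, by omega⟩ : Fin n).succ = k.castSucc := by
                    ext; show m - 1 + 1 = m; omega
                  rwa [this] at h1
                exact (lexmax_le hstar hmem' k (fun j hj => ihm j hj)).1
            have hxk : sortedComp xstar k ≤ sortedComp (seq k.succ) k := by
              have hmemS : sortedComp xstar k ∈ {v : ℝ | ∃ z ∈ X,
                  (∀ i : Fin n, i < k → sortedComp (seq k.castSucc) i ≤ sortedComp z i) ∧
                  v = sortedComp z k} := ⟨xstar, hstar.1, feas, rfl⟩
              have h1 := le_csSup (hfun_bdd hX k (seq k.castSucc)) hmemS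
              have hH' : Hfun X k (seq k.castSucc) ≤ sortedComp (seq k.succ) k := by
                simpa using hH
              exact le_trans h1 hH'
            rcases Nat.lt_or_ge i.val m with hi' | hi'
            · have h1 := ihm i hi'
              have h2 := hcons i hi'
              exact le_trans h1 h2
            · have hik : i = k := Fin.ext (show i.val = m by omega)
              subst hik
              exact hxk
        have hx : ∀ i : Fin n, sortedComp xstar i ≤ sortedComp xhat i := by
          intro i
          have h1 := Q n le_rfl i i.isLt
          rwa [show (⟨n, Nat.lt_succ_of_le le_rfl⟩ : Fin (n+1)) = Fin.last n from rfl,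
            hlast] at h1
        have hmemhat : xhat ∈ X := by
          have h1 := (hstep ⟨n - 1, by omega⟩).1
          have h2 : (⟨n - 1, by omega⟩ : Fin n).succ = Fin.last n := by
            ext; simp [Fin.succ, Fin.last]; omega
          rwa [h2, hlast] at h1
        exact lexmax_eq hstar hmemhat hx
    subst key
    exact ⟨fun i => rfl, hstar⟩
  · intro y hy
    refine ⟨fun _ => y, rfl, fun k => ⟨hy.1, fun i _ => le_rfl, ?_⟩⟩
    have hne : sortedComp y k ∈ {v : ℝ | ∃ z ∈ X,
        (∀ i : Fin n, i < k → sortedComp y i ≤ sortedComp z i) ∧ v = sortedComp z k} :=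
      ⟨y, hy.1, fun i _ => le_rfl, rfl⟩
    have hle : Hfun X k y ≤ sortedComp y k := by
      apply csSup_le ⟨_, hne⟩
      rintro v ⟨z, hz, hcons, rfl⟩
      exact (lexmax_le hy hz k hcons).2
    simpa using hle
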